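/- Let n, m ∈ ℕ, let α > 0 and ν > 0 be real numbers, let W̄ be a symmetric positive definite n×n real matrix, let D be a symmetric n×n real matrix (representing the time derivative of W̄ along a trajectory), let A be an n×n real matrix, B an n×m real matrix, and R a symmetric positive definite m×m real matrix. Define W = ν⁻¹ W̄, M = W⁻¹, Ṁ = −M (ν⁻¹ D) M, and K = −R⁻¹ Bᵀ M. If −D + 2 sym(A W̄) − 2ν B R⁻¹ Bᵀ ⪯ −2α W̄ (Loewner order), then Ṁ + 2 sym(M A + M B K) ⪯ −2α M. Consequently the feedback gain K = −R⁻¹ Bᵀ M is a feasible point of the contraction constraint Ṁ + 2 sym(MA + MBK) ⪯ −2αM, so this constraint is always feasible whenever the CV-STEM matrix inequality for W̄ holds. -/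

import Mathlib

open Matrix

/-- `sym X = (X + Xᵀ)/2`. -/
noncomputable def matSym {n : ℕ} (X : Matrix (Fin n) (Fin n) ℝ) :
    Matrix (Fin n) (Fin n) ℝ := (1 / 2 : ℝ) • (X + Xᵀ)

/-- Loewner order: `X ⪯ Y` iff `Y − X` is positive semidefinite. -/
def loewnerLE {n : ℕ} (X Y : Matrix (Fin n) (Fin n) ℝ) : Prop :=
  (Y - X).PosSemidef

lemma posSemidef_smul' {n : ℕ} {A : Matrix (Fin n) (Fin n) ℝ} (hA : A.PosSemidef)
    {c : ℝ} (hc : 0 ≤ c) : (c • A).PosSemidef := by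
  refine posSemidef_iff_dotProduct_mulVec.mpr ⟨?_, fun x => ?_⟩
  · unfold IsHermitian
    rw [conjTranspose_smul, hA.1.eq]
    simp
  · rw [smul_mulVec, dotProduct_smul]
    exact mul_nonneg hc ((posSemidef_iff_dotProduct_mulVec.mp hA).2 x)

/-- **Feasibility of the greedy stability constraint via CV-STEM.**
With `W = ν⁻¹ W̄`, `M = W⁻¹`, `Ṁ = −M(ν⁻¹D)M`, `K = −R⁻¹BᵀM`: if
`−D + 2 sym(A W̄) − 2ν B R⁻¹ Bᵀ ⪯ −2α W̄`, then
`Ṁ + 2 sym(MA + MBK) ⪯ −2αM`, i.e. the CV-STEM gain `K` is feasible. -/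
theorem cvstem_gain_feasible {n m : ℕ} (α ν : ℝ) (hα : 0 < α) (hν : 0 < ν)
    (Wbar D A : Matrix (Fin n) (Fin n) ℝ) (B : Matrix (Fin n) (Fin m) ℝ)
    (R : Matrix (Fin m) (Fin m) ℝ)
    (hWbar : Wbar.PosDef) (hWbarSymm : Wbar.IsSymm)
    (hD : D.IsSymm) (hR : R.PosDef) (hRSymm : R.IsSymm)
    (W : Matrix (Fin n) (Fin n) ℝ) (hW : W = ν⁻¹ • Wbar)
    (M : Matrix (Fin n) (Fin n) ℝ) (hM : M = W⁻¹)
    (Mdot : Matrix (Fin n) (Fin n) ℝ) (hMdot : Mdot = -(M * (ν⁻¹ • D) * M))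
    (K : Matrix (Fin m) (Fin n) ℝ) (hK : K = -(R⁻¹ * Bᵀ * M))
    (hCVSTEM : loewnerLE (-D + (2 : ℝ) • matSym (A * Wbar)
        - (2 * ν) • (B * R⁻¹ * Bᵀ)) ((-(2 * α)) • Wbar)) :
    loewnerLE (Mdot + (2 : ℝ) • matSym (M * A + M * B * K)) ((-(2 * α)) • M) := by
  have hν0 : (ν : ℝ) ≠ 0 := hν.ne'
  have hνi0 : (ν⁻¹ : ℝ) ≠ 0 := inv_ne_zero hν0
  -- W is invertible
  have hWdet : IsUnit W.det := by
    rw [hW, det_smul]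
    exact (mul_ne_zero (pow_ne_zero _ hνi0) hWbar.det_pos.ne').isUnit
  -- basic identities
  have hWM : W * M = 1 := by rw [hM]; exact mul_nonsing_inv W hWdet
  have hMW : M * W = 1 := by rw [hM]; exact nonsing_inv_mul W hWdet
  have hWbarM : Wbar * M = ν • 1 := by
    have : Wbar = ν • W := by rw [hW, smul_smul, mul_inv_cancel₀ hν0, one_smul]
    rw [this, smul_mul, hWM]
  have hMWbar : M * Wbar = ν • 1 := by
    have : Wbar = ν • W := by rw [hW, smul_smul, mul_inv_cancel₀ hν0, one_smul]
    rw [this, Matrix.mul_smul, hMW]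
  have hMs : Mᵀ = M := by
    rw [hM, transpose_nonsing_inv]
    congr 1
    rw [hW, transpose_smul, hWbarSymm.eq]
  have hRi : (R⁻¹)ᵀ = R⁻¹ := by rw [transpose_nonsing_inv, hRSymm.eq]
  -- key assoc rewrites
  have key1 : ∀ X : Matrix (Fin n) (Fin n) ℝ, M * (Wbar * X) = ν • X := by
    intro X; rw [← Matrix.mul_assoc, hMWbar, smul_mul, Matrix.one_mul]
  -- the conjugated CV-STEM matrix
  have hpsd := posSemidef_smul' (hCVSTEM.mul_mul_conjTranspose_same M)
    (le_of_lt (inv_pos.mpr hν) : (0:ℝ) ≤ ν⁻¹)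
  rw [conjTranspose_eq_transpose_of_trivial, hMs] at hpsd
  unfold loewnerLE
  have hkey : (-(2 * α)) • M - (Mdot + (2 : ℝ) • matSym (M * A + M * B * K)) =
      ν⁻¹ • (M * ((-(2 * α)) • Wbar - (-D + (2 : ℝ) • matSym (A * Wbar)
        - (2 * ν) • (B * R⁻¹ * Bᵀ))) * M) := by
    subst hMdot hK
    simp only [matSym, Matrix.mul_sub, Matrix.sub_mul, Matrix.mul_add, Matrix.add_mul,
      Matrix.mul_smul, Matrix.smul_mul, Matrix.neg_mul, Matrix.mul_neg,
      transpose_add, transpose_mul, transpose_neg, transpose_smul, transpose_transpose,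
      hMs, hRi, hWbarSymm.eq, Matrix.mul_assoc, hWbarM, key1,
      smul_smul, smul_add, smul_sub, smul_neg, Matrix.mul_one, Matrix.one_mul,
      Matrix.mul_smul, Matrix.smul_mul]
    match_scalars <;> field_simp <;> ring
  rw [hkey]
  exact hpsd
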